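/- Let $k$ be a field of characteristic zero, let $t \geq 1$ and $u \geq 0$ be integers, and let $c_1, c_2 \in k \setminus \{0\}$. Then the $k$-derivation $d = \partial_x + x^u(c_1 x^t + c_2 y)\partial_y$ of $k[x,y]$ is simple if and only if $(u+1) \nmid t$. -/

import Mathlib

open MvPolynomial

noncomputable section
open Polynomial

section General
variable (k : Type*) [CommRing k]

abbrev MvP (k : Type*) [CommRing k] := MvPolynomial (Fin 2) k
abbrev PA (k : Type*) [CommRing k] := Polynomial (Polynomial k)

def φAux : MvP k →ₐ[k] PA k :=
  MvPolynomial.aeval ![Polynomial.C Polynomial.X, Polynomial.X]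

def ψAux : PA k →ₐ[k] MvP k :=
  Polynomial.aevalTower (Polynomial.aeval (MvPolynomial.X 0)) (MvPolynomial.X 1)

def eAux : MvP k ≃ₐ[k] PA k :=
  AlgEquiv.ofAlgHom (φAux k) (ψAux k)
    (by
      apply Polynomial.algHom_ext'
      · apply Polynomial.algHom_ext
        simp [φAux, ψAux]
      · simp [φAux, ψAux])
    (by
      apply MvPolynomial.algHom_ext
      intro i
      fin_cases i <;> simp [φAux, ψAux])

@[simp] lemma eAux_X0 : eAux k (MvPolynomial.X 0) = Polynomial.C Polynomial.X := by
  simp [eAux, φAux]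

@[simp] lemma eAux_X1 : eAux k (MvPolynomial.X 1) = Polynomial.X := by
  simp [eAux, φAux]

@[simp] lemma eAux_C (c : k) :
    eAux k (MvPolynomial.C c) = Polynomial.C (Polynomial.C c) := by
  rw [← MvPolynomial.algebraMap_eq, AlgEquiv.commutes]
  rfl

@[simp] lemma eAux_symm_X : (eAux k).symm Polynomial.X = MvPolynomial.X 1 := by
  simp [eAux, ψAux]

@[simp] lemma eAux_symm_C (p : Polynomial k) :
    (eAux k).symm (Polynomial.C p) = Polynomial.aeval (MvPolynomial.X 0) p := by
  simp [eAux, ψAux]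

/-- conjugate a derivation through `eAux`. -/
def conjDer (d : Derivation k (MvP k) (MvP k)) : Derivation k (PA k) (PA k) where
  toLinearMap := (eAux k).toLinearMap ∘ₗ d.toLinearMap ∘ₗ (eAux k).symm.toLinearMap
  map_one_eq_zero' := by simp
  leibniz' a b := by
    simp only [LinearMap.comp_apply, AlgEquiv.toLinearMap_apply, Derivation.coeFn_coe]
    rw [map_mul, Derivation.leibniz]
    simp only [smul_eq_mul, map_add, map_mul, AlgEquiv.apply_symm_apply]

@[simp] lemma conjDer_apply (d : Derivation k (MvP k) (MvP k)) (f : PA k) :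
    conjDer k d f = eAux k (d ((eAux k).symm f)) := rfl

end General

section Spec
variable {k : Type*} [Field k] [CharZero k]
variable (t u : ℕ) (c₁ c₂ : k)

def dSpec : Derivation k (MvP k) (MvP k) :=
  MvPolynomial.mkDerivation k
    ![1, MvPolynomial.X 0 ^ u * (MvPolynomial.C c₁ * MvPolynomial.X 0 ^ t
        + MvPolynomial.C c₂ * MvPolynomial.X 1)]

@[simp] lemma dSpec_X0 : dSpec t u c₁ c₂ (MvPolynomial.X 0) = 1 := by
  simp [dSpec]

@[simp] lemma dSpec_X1 :
    dSpec t u c₁ c₂ (MvPolynomial.X 1)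
      = MvPolynomial.X 0 ^ u * (MvPolynomial.C c₁ * MvPolynomial.X 0 ^ t
          + MvPolynomial.C c₂ * MvPolynomial.X 1) := by
  simp [dSpec]

def DSpec : Derivation k (PA k) (PA k) := conjDer k (dSpec t u c₁ c₂)

def aP : Polynomial k := Polynomial.C c₂ * Polynomial.X ^ u
def bP : Polynomial k := Polynomial.C c₁ * Polynomial.X ^ (t + u)

lemma DSpec_C (p : Polynomial k) :
    DSpec t u c₁ c₂ (Polynomial.C p) = Polynomial.C (derivative p) := by
  rw [DSpec, conjDer_apply, eAux_symm_C, Derivation.map_aeval]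
  simp only [dSpec_X0, smul_eq_mul, mul_one]
  rw [← Polynomial.aeval_algHom_apply (eAux k) (MvPolynomial.X 0) (derivative p), eAux_X0,
    show (Polynomial.C Polynomial.X : PA k) = Polynomial.CAlgHom (R := k) Polynomial.X from rfl,
    Polynomial.aeval_algHom_apply (Polynomial.CAlgHom (R := k)) Polynomial.X (derivative p)]
  simp

lemma DSpec_X :
    DSpec t u c₁ c₂ Polynomial.X
      = Polynomial.C (aP u c₂) * Polynomial.X + Polynomial.C (bP t u c₁) := by
  rw [DSpec, conjDer_apply, eAux_symm_X, dSpec_X1]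
  simp only [map_mul, map_add, map_pow, eAux_X0, eAux_X1, eAux_C]
  simp only [aP, bP, ← Polynomial.C_pow, ← Polynomial.C_mul, mul_add]
  ring_nf
  simp only [← Polynomial.C_mul]
  ring_nf

lemma DSpec_monomial (i : ℕ) (q : Polynomial k) :
    DSpec t u c₁ c₂ (Polynomial.monomial i q)
      = Polynomial.monomial i (derivative q)
        + i • Polynomial.monomial i (q * aP u c₂)
        + i • Polynomial.monomial (i - 1) (q * bP t u c₁) := by
  rw [← Polynomial.C_mul_X_pow_eq_monomial, Derivation.leibniz, Derivation.leibniz_pow,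
    DSpec_X, DSpec_C]
  cases i with
  | zero => simp
  | succ l =>
    simp only [smul_eq_mul, nsmul_eq_mul, Nat.succ_sub_one,
      ← Polynomial.C_mul_X_pow_eq_monomial, Polynomial.C_mul]
    push_cast
    ring

lemma DSpec_coeff (f : PA k) (j : ℕ) :
    (DSpec t u c₁ c₂ f).coeff j
      = derivative (f.coeff j) + (j : Polynomial k) * aP u c₂ * f.coeff j
        + ((j + 1 : ℕ) : Polynomial k) * bP t u c₁ * f.coeff (j + 1) := by
  induction f using Polynomial.induction_on' with
  | add p q hp hq =>
    simp only [map_add, Polynomial.coeff_add, hp, hq]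
    ring
  | monomial i q =>
    rw [DSpec_monomial]
    simp only [Polynomial.coeff_add, Polynomial.coeff_smul, Polynomial.coeff_monomial,
      apply_ite derivative, derivative_zero, smul_ite, smul_zero]
    by_cases h1 : i = j
    · subst h1
      have h2 : ¬ (i = i + 1) := by omega
      simp only [if_pos rfl, if_neg h2]
      rcases Nat.eq_zero_or_pos i with hi | hi
      · subst hi; simp
      · have h3 : ¬ (i - 1 = i) := by omega
        simp only [if_neg h3, smul_zero, smul_eq_mul, nsmul_eq_mul, mul_zero, add_zero]
        push_cast
        ring
    · simp only [if_neg h1]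
      by_cases h4 : i = j + 1
      · subst h4
        have h5 : j + 1 - 1 = j := by omega
        simp only [h5, if_pos rfl, nsmul_eq_mul]
        push_cast
        ring
      · have h6 : ¬ (i - 1 = j) ∨ i = 0 := by omega
        rcases h6 with h6 | h6
        · simp [if_neg h6, if_neg h4]
        · subst h6; simp

end Spec

section ODE
variable {k : Type*} [Field k] [CharZero k]

/-- Existence of a polynomial solution to `p' = c₂ x^u p + c x^(s(u+1)+u)`. -/
lemma exists_sol (u : ℕ) {c₂ : k} (hc₂ : c₂ ≠ 0) :
    ∀ (s : ℕ) (c : k), ∃ p : Polynomial k,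
      derivative p = Polynomial.C c₂ * Polynomial.X ^ u * p
        + Polynomial.C c * Polynomial.X ^ (s * (u + 1) + u) := by
  intro s
  induction s with
  | zero =>
    intro c
    refine ⟨Polynomial.C (-c / c₂), ?_⟩
    rw [Polynomial.derivative_C]
    have h1' : Polynomial.C c₂ * Polynomial.C (-c / c₂) + Polynomial.C c = (0 : Polynomial k) := by
      rw [← Polynomial.C_mul, ← Polynomial.C_add,
        show c₂ * (-c / c₂) + c = 0 from by field_simp; ring, Polynomial.C_0]
    have he : 0 * (u + 1) + u = u := by ring
    rw [he]
    linear_combination (-(Polynomial.X : Polynomial k) ^ u) * h1'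
  | succ s ih =>
    intro c
    set γ : k := -c / c₂ with hγ
    obtain ⟨q, hq⟩ := ih (-γ * ((s * (u + 1) + u + 1 : ℕ) : k))
    refine ⟨Polynomial.C γ * Polynomial.X ^ (s * (u + 1) + u + 1) + q, ?_⟩
    rw [derivative_add, derivative_C_mul, derivative_X_pow, hq]
    have hexp : (s + 1) * (u + 1) + u = (s * (u + 1) + u + 1) + u := by ring
    rw [hexp]
    have h1' : Polynomial.C c₂ * Polynomial.C γ + Polynomial.C c = (0 : Polynomial k) := by
      rw [← Polynomial.C_mul, ← Polynomial.C_add, show c₂ * γ + c = 0 from by rw [hγ]; field_simp; ring,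
        Polynomial.C_0]
    have h2' : Polynomial.C γ * Polynomial.C (((s * (u + 1) + u + 1 : ℕ) : k))
        + Polynomial.C (-γ * ((s * (u + 1) + u + 1 : ℕ) : k)) = (0 : Polynomial k) := by
      rw [← Polynomial.C_mul, ← Polynomial.C_add,
        show γ * ((s * (u + 1) + u + 1 : ℕ) : k) + -γ * ((s * (u + 1) + u + 1 : ℕ) : k) = 0
          from by ring, Polynomial.C_0]
    have hsub : s * (u + 1) + u + 1 - 1 = s * (u + 1) + u := by omega
    rw [hsub]
    linear_combination (-(Polynomial.X : Polynomial k) ^ (s * (u + 1) + u + 1 + u)) * h1' +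
      (Polynomial.X : Polynomial k) ^ (s * (u + 1) + u) * h2'

/-- Non-existence of polynomial solutions to `p' = c₂ x^u p + c x^(t+u)` when `(u+1) ∤ t`. -/
lemma no_sol {t u : ℕ} (hnd : ¬ (u + 1) ∣ t) {c₂ c : k} (hc₂ : c₂ ≠ 0) (hc : c ≠ 0)
    (p : Polynomial k)
    (hp : derivative p = Polynomial.C c₂ * Polynomial.X ^ u * p
      + Polynomial.C c * Polynomial.X ^ (t + u)) : False := by
  have hp' : derivative p = Polynomial.C c₂ * (p * Polynomial.X ^ u)
      + Polynomial.C c * Polynomial.X ^ (t + u) := by rw [hp]; ring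
  have rel : ∀ j : ℕ, p.coeff (j + 1) * ((j : k) + 1)
      = (if u ≤ j then c₂ * p.coeff (j - u) else 0)
        + (if j = t + u then c else 0) := by
    intro j
    have h := congrArg (fun q => Polynomial.coeff q j) hp'
    simp only [Polynomial.coeff_derivative, Polynomial.coeff_add, Polynomial.coeff_C_mul,
      Polynomial.coeff_mul_X_pow', mul_ite, mul_zero] at h
    have h2 : (if t + u ≤ j then (Polynomial.C c).coeff (j - (t + u)) else 0)
        = (if j = t + u then c else 0) := by
      split_ifs with ha hb hb
      · rw [Polynomial.coeff_C, if_pos (by omega)]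
      · rw [Polynomial.coeff_C, if_neg (by omega)]
      · omega
      · rfl
    rw [h2] at h
    exact h
  have claim1 : ∀ i, i ≤ t → i % (u + 1) = t % (u + 1) → p.coeff i = 0 := by
    intro i
    induction i using Nat.strong_induction_on with
    | _ i IH =>
      intro hle hmod
      rcases Nat.eq_zero_or_pos i with rfl | hi
      · rw [Nat.zero_mod] at hmod
        exact absurd (Nat.dvd_of_mod_eq_zero hmod.symm) hnd
      · obtain ⟨j, rfl⟩ : ∃ j, i = j + 1 := ⟨i - 1, by omega⟩
        have h := rel j
        have hjne : ¬ (j = t + u) := by omega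
        rw [if_neg hjne, add_zero] at h
        have hcoeff0 : p.coeff (j + 1) * ((j : k) + 1) = 0 := by
          by_cases hu : u ≤ j
          · rw [if_pos hu] at h
            have hmod2 : (j + 1) % (u + 1) = (j - u) % (u + 1) := by
              conv_lhs => rw [show j + 1 = (j - u) + (u + 1) by omega]
              rw [Nat.add_mod_right]
            have hz : p.coeff (j - u) = 0 :=
              IH (j - u) (by omega) (by omega) (by rw [← hmod2]; exact hmod)
            rw [hz, mul_zero] at h
            exact h
          · rw [if_neg hu] at h
            exact h
        rcases mul_eq_zero.mp hcoeff0 with h0 | h0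
        · exact h0
        · exact absurd h0 (Nat.cast_add_one_ne_zero (R := k) j)
  have claim2 : ∀ m : ℕ, p.coeff (t + u + 1 + m * (u + 1)) ≠ 0 := by
    intro m
    induction m with
    | zero =>
      simp only [Nat.zero_mul, Nat.add_zero]
      have h := rel (t + u)
      rw [if_pos (Nat.le_add_left u t), if_pos rfl,
        show t + u - u = t by omega, claim1 t le_rfl rfl, mul_zero, zero_add] at h
      intro h0
      rw [h0, zero_mul] at h
      exact hc h.symm
    | succ m IH =>
      set j := t + u + 1 + m * (u + 1) + u with hj
      have hidx : t + u + 1 + (m + 1) * (u + 1) = j + 1 := by rw [hj]; ring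
      rw [hidx]
      have h := rel j
      have hju : u ≤ j := by omega
      have hjne : ¬ (j = t + u) := by
        intro hcontra
        omega
      rw [if_pos hju, if_neg hjne, add_zero,
        show j - u = t + u + 1 + m * (u + 1) by omega] at h
      intro h0
      rw [h0, zero_mul] at h
      exact (mul_ne_zero hc₂ IH) h.symm
  have hbig : p.natDegree < t + u + 1 + (p.natDegree + 1) * (u + 1) := by
    have : p.natDegree + 1 ≤ (p.natDegree + 1) * (u + 1) :=
      Nat.le_mul_of_pos_right _ (by omega)
    omega
  exact claim2 (p.natDegree + 1) (Polynomial.coeff_eq_zero_of_natDegree_lt hbig)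

end ODE

end

/-- A `k`-derivation `d` of `k[x,y]` is *simple* if the only `d`-differential ideals
(ideals `I` with `d(I) ⊆ I`) are `(0)` and the whole ring. Here `k[x,y]` is modelled as
`MvPolynomial (Fin 2) k`, with `x = X 0` and `y = X 1`. -/
def IsSimpleDerivation {k : Type*} [CommRing k]
    (d : Derivation k (MvPolynomial (Fin 2) k) (MvPolynomial (Fin 2) k)) : Prop :=
  ∀ I : Ideal (MvPolynomial (Fin 2) k), (∀ f ∈ I, d f ∈ I) → I = ⊥ ∨ I = ⊤

theorem simple_derivation_dx_xu_c1xt_c2y_iff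
    (k : Type*) [Field k] [CharZero k]
    (t u : ℕ) (ht : 1 ≤ t)
    (c₁ c₂ : k) (hc₁ : c₁ ≠ 0) (hc₂ : c₂ ≠ 0) :
    IsSimpleDerivation
      (MvPolynomial.mkDerivation k
        ![1, X 0 ^ u * (C c₁ * X 0 ^ t + C c₂ * X 1)]) ↔
      ¬ (u + 1) ∣ t := by
  show IsSimpleDerivation (dSpec t u c₁ c₂) ↔ _
  constructor
  · -- simple → not dvd
    intro hsimple hdvd
    obtain ⟨s, hs⟩ := hdvd
    obtain ⟨p, hp⟩ := exists_sol u hc₂ s c₁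
    rw [show s * (u + 1) + u = t + u by rw [hs]; ring] at hp
    set F : MvP k := MvPolynomial.X 1 - Polynomial.aeval (MvPolynomial.X 0) p with hF
    have key : dSpec t u c₁ c₂ F = (MvPolynomial.C c₂ * MvPolynomial.X 0 ^ u) * F := by
      rw [hF, map_sub, dSpec_X1, Derivation.map_aeval, dSpec_X0, smul_eq_mul, mul_one, hp]
      simp only [map_add, map_mul, map_pow, Polynomial.aeval_X, Polynomial.aeval_C,
        MvPolynomial.algebraMap_eq, mul_sub]
      ring
    have hinv : ∀ f ∈ Ideal.span {F}, dSpec t u c₁ c₂ f ∈ Ideal.span {F} := by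
      intro f hf
      rw [Ideal.mem_span_singleton] at hf ⊢
      obtain ⟨g, rfl⟩ := hf
      rw [Derivation.leibniz, key, smul_eq_mul, smul_eq_mul]
      exact dvd_add (Dvd.intro _ rfl) ⟨g * (MvPolynomial.C c₂ * MvPolynomial.X 0 ^ u), by ring⟩
    have heF : eAux k F = Polynomial.X - Polynomial.C p := by
      rw [hF, map_sub, eAux_X1]
      congr 1
      have := congrArg (eAux k) (eAux_symm_C k p)
      rw [AlgEquiv.apply_symm_apply] at this
      exact this.symm
    rcases hsimple (Ideal.span {F}) hinv with hbot | htop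
    · have hF0 : F = 0 := by
        have := Ideal.mem_span_singleton_self F
        rw [hbot] at this
        exact (Submodule.mem_bot _).mp this
      have : (Polynomial.X - Polynomial.C p : PA k) = 0 := by
        rw [← heF, hF0, map_zero]
      exact Polynomial.X_sub_C_ne_zero p this
    · have h1 : F ∣ 1 := by
        rw [← Ideal.mem_span_singleton, htop]
        trivial
      obtain ⟨v, hv⟩ := h1
      have : (Polynomial.X - Polynomial.C p : PA k) * eAux k v = 1 := by
        rw [← heF, ← map_mul, ← hv, map_one]
      have hunit : IsUnit (Polynomial.X - Polynomial.C p : PA k) := isUnit_iff_exists_inv.mpr ⟨_, this⟩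
      have := Polynomial.natDegree_eq_zero_of_isUnit hunit
      rw [Polynomial.natDegree_X_sub_C] at this
      exact one_ne_zero this
  · -- not dvd → simple
    intro hnd I hI
    by_cases hbot : I = ⊥
    · exact Or.inl hbot
    right
    set I' : Ideal (PA k) := I.comap ((eAux k).symm.toAlgHom.toRingHom) with hI'
    have hmem : ∀ f : PA k, f ∈ I' ↔ (eAux k).symm f ∈ I := fun f => Iff.rfl
    have hinv' : ∀ f ∈ I', DSpec t u c₁ c₂ f ∈ I' := by
      intro f hf
      rw [hmem]
      rw [DSpec, conjDer_apply, AlgEquiv.symm_apply_apply]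
      exact hI _ ((hmem f).mp hf)
    obtain ⟨x, hxI, hxne⟩ := Submodule.exists_mem_ne_zero_of_ne_bot hbot
    have hex : ∃ n : ℕ, (∃ f ∈ I', f ≠ 0 ∧ f.natDegree = n)
        ∧ ∀ f ∈ I', f ≠ 0 → n ≤ f.natDegree := by
      set S : Set ℕ := {m | ∃ f ∈ I', f ≠ 0 ∧ f.natDegree = m} with hSdef
      have hS : S.Nonempty := by
        refine ⟨(eAux k x).natDegree, eAux k x, ?_, ?_, rfl⟩
        · rw [hmem, AlgEquiv.symm_apply_apply]; exact hxI
        · simpa using hxne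
      exact ⟨sInf S, Nat.sInf_mem hS, fun f hf hne => Nat.sInf_le ⟨f, hf, hne, rfl⟩⟩
    obtain ⟨n, ⟨f₀, hf₀I, hf₀ne, hf₀deg⟩, hmin⟩ := hex
    -- the ideal of n-th coefficients
    set J : Ideal (Polynomial k) :=
      { carrier := {c | ∃ f ∈ I', f.natDegree ≤ n ∧ f.coeff n = c}
        add_mem' := by
          rintro a b ⟨f, hf, hdf, rfl⟩ ⟨g, hg, hdg, rfl⟩
          exact ⟨f + g, I'.add_mem hf hg,
            le_trans (Polynomial.natDegree_add_le f g) (max_le hdf hdg),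
            by rw [Polynomial.coeff_add]⟩
        zero_mem' := ⟨0, I'.zero_mem, by simp, by simp⟩
        smul_mem' := by
          rintro r a ⟨f, hf, hdf, rfl⟩
          exact ⟨Polynomial.C r * f, I'.mul_mem_left _ hf,
            le_trans (Polynomial.natDegree_C_mul_le r f) hdf,
            by rw [Polynomial.coeff_C_mul, smul_eq_mul]⟩ } with hJdef
    have hJmem : ∀ c : Polynomial k,
        c ∈ J ↔ ∃ f ∈ I', f.natDegree ≤ n ∧ f.coeff n = c := fun c => Iff.rfl
    have hDdeg : ∀ f : PA k, f.natDegree ≤ n → (DSpec t u c₁ c₂ f).natDegree ≤ n := by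
      intro f hfd
      rw [Polynomial.natDegree_le_iff_coeff_eq_zero]
      intro N hN
      rw [DSpec_coeff]
      rw [Polynomial.coeff_eq_zero_of_natDegree_lt (lt_of_le_of_lt hfd hN),
        Polynomial.coeff_eq_zero_of_natDegree_lt
          (show f.natDegree < N + 1 from lt_of_le_of_lt hfd (by omega))]
      simp
    have hJclosed : ∀ c ∈ J, Polynomial.derivative c + (n : Polynomial k) * aP u c₂ * c ∈ J := by
      rintro c ⟨f, hf, hfd, rfl⟩
      refine ⟨DSpec t u c₁ c₂ f, hinv' f hf, hDdeg f hfd, ?_⟩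
      rw [DSpec_coeff, Polynomial.coeff_eq_zero_of_natDegree_lt
        (show f.natDegree < n + 1 from lt_of_le_of_lt hfd (by omega))]
      simp
    have hJne : J ≠ ⊥ := by
      intro hJbot
      have hmemJ : f₀.coeff n ∈ J := ⟨f₀, hf₀I, le_of_eq hf₀deg, rfl⟩
      rw [hJbot] at hmemJ
      have : f₀.coeff n = 0 := (Submodule.mem_bot _).mp hmemJ
      rw [← hf₀deg, Polynomial.coeff_natDegree] at this
      exact (Polynomial.leadingCoeff_ne_zero.mpr hf₀ne) this
    obtain ⟨g, hgJ0⟩ := (IsPrincipalIdealRing.principal J).principal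
    have hgJ : J = Ideal.span {g} := hgJ0
    have hgmem : g ∈ J := by rw [hgJ]; exact Ideal.mem_span_singleton_self g
    have hgne : g ≠ 0 := by
      rintro rfl
      exact hJne (by rw [hgJ, Ideal.span_singleton_eq_bot])
    have hgdvd : g ∣ Polynomial.derivative g := by
      have h1 : Polynomial.derivative g + (n : Polynomial k) * aP u c₂ * g ∈ Ideal.span {g} := by
        rw [← hgJ]; exact hJclosed g hgmem
      rw [Ideal.mem_span_singleton] at h1
      have h2 : g ∣ (n : Polynomial k) * aP u c₂ * g := Dvd.intro_left _ rfl
      have h3 : Polynomial.derivative g = (Polynomial.derivative g + (n : Polynomial k) * aP u c₂ * g)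
          - (n : Polynomial k) * aP u c₂ * g := by ring
      rw [h3]
      exact dvd_sub h1 h2
    have hgder : Polynomial.derivative g = 0 := by
      by_contra hne
      have hdeg0 : g.natDegree ≠ 0 := by
        intro h0
        rw [Polynomial.eq_C_of_natDegree_eq_zero h0] at hne
        exact hne (Polynomial.derivative_C)
      have hlt := Polynomial.natDegree_derivative_lt hdeg0
      have hle := Polynomial.natDegree_le_of_dvd hgdvd hne
      omega
    have hgC : g = Polynomial.C (g.coeff 0) := Polynomial.eq_C_of_derivative_eq_zero hgder
    have hγne : g.coeff 0 ≠ 0 := by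
      intro h0
      apply hgne
      rw [hgC, h0, Polynomial.C_0]
    have h1J : (1 : Polynomial k) ∈ J := by
      have := J.smul_mem (Polynomial.C (g.coeff 0)⁻¹) hgmem
      rw [smul_eq_mul] at this
      have heq : Polynomial.C (g.coeff 0)⁻¹ * g = 1 := by
        nth_rewrite 2 [hgC]
        rw [← Polynomial.C_mul, inv_mul_cancel₀ hγne, Polynomial.C_1]
      rwa [heq] at this
    obtain ⟨f, hfI, hfd, hfc⟩ := (hJmem 1).mp h1J
    have hfdeg : f.natDegree = n := by
      rcases lt_or_eq_of_le hfd with hlt | heq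
      · exfalso
        rw [Polynomial.coeff_eq_zero_of_natDegree_lt hlt] at hfc
        exact one_ne_zero hfc.symm
      · exact heq
    rcases n with _ | m
    · -- n = 0 : f = 1 ∈ I'
      have : f = 1 := by
        rw [Polynomial.eq_C_of_natDegree_eq_zero hfdeg, hfc, Polynomial.C_1]
      rw [this] at hfI
      rw [Ideal.eq_top_iff_one]
      have := (hmem 1).mp hfI
      rwa [map_one] at this
    · -- n = m + 1 : extract an ODE solution, contradiction
      exfalso
      set h : PA k := DSpec t u c₁ c₂ f
        - Polynomial.C (((m + 1 : ℕ) : Polynomial k) * aP u c₂) * f with hhdef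
      have hhI : h ∈ I' := I'.sub_mem (hinv' f hfI) (I'.mul_mem_left _ hfI)
      have hcoeffzero : ∀ j, m + 1 ≤ j → h.coeff j = 0 := by
        intro j hj
        rw [hhdef, Polynomial.coeff_sub, DSpec_coeff, Polynomial.coeff_C_mul]
        rcases eq_or_lt_of_le hj with heq | hlt
        · rw [← heq]
          rw [hfc, show f.coeff (m + 1 + 1) = 0 from
            Polynomial.coeff_eq_zero_of_natDegree_lt (by omega)]
          simp
        · rw [Polynomial.coeff_eq_zero_of_natDegree_lt (by omega),
            Polynomial.coeff_eq_zero_of_natDegree_lt (show f.natDegree < j + 1 by omega)]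
          simp
      have hh0 : h = 0 := by
        by_contra hne0
        have hle := hmin h hhI hne0
        have : h.coeff h.natDegree = 0 := hcoeffzero _ hle
        rw [Polynomial.coeff_natDegree] at this
        exact (Polynomial.leadingCoeff_ne_zero.mpr hne0) this
      have h0 : h.coeff m = 0 := by rw [hh0]; simp
      rw [hhdef, Polynomial.coeff_sub, DSpec_coeff, Polynomial.coeff_C_mul, hfc] at h0
      set p : Polynomial k := f.coeff m with hpdef
      have hp : Polynomial.derivative p = Polynomial.C c₂ * Polynomial.X ^ u * p
          + Polynomial.C (-(((m + 1 : ℕ)) : k) * c₁) * Polynomial.X ^ (t + u) := by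
        have hC : Polynomial.C (-(((m + 1 : ℕ)) : k) * c₁)
            = -(((m + 1 : ℕ)) : Polynomial k) * Polynomial.C c₁ := by
          rw [Polynomial.C_mul, Polynomial.C_neg, map_natCast]
        rw [hC]
        simp only [aP, bP] at h0
        push_cast at h0 ⊢
        linear_combination h0
      exact no_sol hnd hc₂
        (mul_ne_zero (neg_ne_zero.mpr (Nat.cast_ne_zero.mpr (by omega))) hc₁) p hp
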